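/- Let λ be a real number. For every natural number n and every real x, the degenerate Bernoulli polynomials satisfy the recurrence β_{n,λ}(x) = (x+1)_{n,λ} - Σ_{l=0}^{n-1} C(n,l) β_{l,λ}(x) · M_{n-l+1,λ}/(n-l+1), where M_{m,λ} = (2)_{m,λ} - (1)_{m,λ} are the dimorphic Mersenne numbers. -/

import Mathlib

/-- The degenerate falling factorial `(x)_{n,λ} = x (x - λ) (x - 2λ) ⋯ (x - (n-1)λ)`,
with `(x)_{0,λ} = 1`. -/
def degFallingFactorial (lam x : ℝ) (n : ℕ) : ℝ :=
  ∏ i ∈ Finset.range n, (x - i * lam)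

/-- The degenerate exponential `e_λ^x(t) = ∑_{n=0}^∞ (x)_{n,λ} t^n/n!` as a formal
power series in `ℝ[[t]]`. -/
noncomputable def degExpSeries (lam x : ℝ) : PowerSeries ℝ :=
  PowerSeries.mk fun n => degFallingFactorial lam x n / (n.factorial : ℝ)

/-- The formal power series `(e_λ(t) - 1)/t`, whose constant term is `1`. -/
noncomputable def degExpSubOneDivT (lam : ℝ) : PowerSeries ℝ :=
  PowerSeries.mk fun n => degFallingFactorial lam 1 (n + 1) / ((n + 1).factorial : ℝ)

/-- The generating series `(t/(e_λ(t)-1)) ⬝ e_λ^x(t) = ∑_{n=0}^∞ β_{n,λ}(x) t^n/n!` of the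
degenerate Bernoulli polynomials, where `t/(e_λ(t)-1)` denotes the multiplicative inverse
of the series `(e_λ(t)-1)/t`. -/
noncomputable def degBernoulliSeries (lam x : ℝ) : PowerSeries ℝ :=
  (degExpSubOneDivT lam)⁻¹ * degExpSeries lam x

/-- The degenerate Bernoulli polynomial `β_{n,λ}(x)`, read off from its generating series. -/
noncomputable def degBernoulli (lam x : ℝ) (n : ℕ) : ℝ :=
  (n.factorial : ℝ) * PowerSeries.coeff n (degBernoulliSeries lam x)

/-- The dimorphic Mersenne number `M_{n,λ} = (2)_{n,λ} - (1)_{n,λ}`. -/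
def dimorphicMersenne (lam : ℝ) (n : ℕ) : ℝ :=
  degFallingFactorial lam 2 n - degFallingFactorial lam 1 n

lemma dff_zero (lam x : ℝ) : degFallingFactorial lam x 0 = 1 := rfl

lemma dff_succ (lam x : ℝ) (n : ℕ) :
    degFallingFactorial lam x (n + 1) = degFallingFactorial lam x n * (x - n * lam) :=
  Finset.prod_range_succ _ _

/-- Degenerate Vandermonde convolution. -/
lemma dff_vandermonde (lam x y : ℝ) (n : ℕ) :
    degFallingFactorial lam (x + y) n =
      ∑ k ∈ Finset.range (n + 1),
        (n.choose k : ℝ) * degFallingFactorial lam x k * degFallingFactorial lam y (n - k) := by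
  induction n with
  | zero => simp [degFallingFactorial]
  | succ n ih =>
    have key : ∀ k ∈ Finset.range (n + 1),
        (n.choose k : ℝ) * degFallingFactorial lam x k * degFallingFactorial lam y (n - k) *
            (x + y - n * lam)
          = (n.choose k : ℝ) * degFallingFactorial lam x (k + 1) * degFallingFactorial lam y (n - k)
            + (n.choose k : ℝ) * degFallingFactorial lam x k *
                degFallingFactorial lam y (n - k + 1) := by
      intro k hk
      have hk' : k ≤ n := Nat.lt_succ_iff.mp (Finset.mem_range.mp hk)
      have hc : ((n - k : ℕ) : ℝ) = (n : ℝ) - k := by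
        rw [Nat.cast_sub hk']
      rw [dff_succ, dff_succ, hc]
      ring
    rw [dff_succ, ih, Finset.sum_mul, Finset.sum_congr rfl key, Finset.sum_add_distrib]
    have hT : ∑ k ∈ Finset.range (n + 2),
        ((n + 1).choose k : ℝ) * degFallingFactorial lam x k *
          degFallingFactorial lam y (n + 1 - k)
        = (∑ k ∈ Finset.range (n + 1),
            (n.choose k : ℝ) * degFallingFactorial lam x (k + 1) *
              degFallingFactorial lam y (n - k))
          + (∑ k ∈ Finset.range (n + 1),
            (n.choose (k + 1) : ℝ) * degFallingFactorial lam x (k + 1) *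
              degFallingFactorial lam y (n - k))
          + degFallingFactorial lam y (n + 1) := by
      rw [Finset.sum_range_succ', ← Finset.sum_add_distrib]
      congr 1
      · apply Finset.sum_congr rfl
        intro k hk
        simp only [Nat.choose_succ_succ, Nat.cast_add, Nat.succ_sub_succ_eq_sub]
        ring
      · simp [dff_zero]
    rw [hT]
    have hS2 : ∑ k ∈ Finset.range (n + 1),
        (n.choose k : ℝ) * degFallingFactorial lam x k *
          degFallingFactorial lam y (n - k + 1)
        = (∑ k ∈ Finset.range (n + 1),
            (n.choose (k + 1) : ℝ) * degFallingFactorial lam x (k + 1) *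
              degFallingFactorial lam y (n - k))
          + degFallingFactorial lam y (n + 1) := by
      rw [Finset.sum_range_succ']
      simp only [Nat.choose_zero_right, Nat.cast_one, dff_zero, Nat.sub_zero, one_mul, mul_one]
      congr 1
      · rw [Finset.sum_range_succ]
        simp only [Nat.choose_succ_self, Nat.cast_zero, zero_mul, mul_zero, add_zero, zero_add]
        apply Finset.sum_congr rfl
        intro k hk
        have hk' : k < n := Finset.mem_range.mp hk
        have : n - (k + 1) + 1 = n - k := by omega
        rw [this]
    rw [hS2]
    ring

/-- The degenerate exponentials multiply like exponentials. -/
lemma degExpSeries_mul (lam x y : ℝ) :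
    degExpSeries lam x * degExpSeries lam y = degExpSeries lam (x + y) := by
  ext n
  rw [PowerSeries.coeff_mul]
  simp only [degExpSeries, PowerSeries.coeff_mk]
  rw [Finset.Nat.sum_antidiagonal_eq_sum_range_succ_mk, dff_vandermonde, Finset.sum_div]
  apply Finset.sum_congr rfl
  intro k hk
  have hk' : k ≤ n := Nat.lt_succ_iff.mp (Finset.mem_range.mp hk)
  rw [Nat.cast_choose ℝ hk']
  have h1 : (k.factorial : ℝ) ≠ 0 := Nat.cast_ne_zero.mpr k.factorial_ne_zero
  have h2 : ((n - k).factorial : ℝ) ≠ 0 := Nat.cast_ne_zero.mpr (n - k).factorial_ne_zero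
  have h3 : (n.factorial : ℝ) ≠ 0 := Nat.cast_ne_zero.mpr n.factorial_ne_zero
  field_simp

/-- The series `(e_λ^2(t) - e_λ(t))/t = ∑ M_{n+1,λ}/(n+1)! tⁿ`. -/
noncomputable def mersSeries (lam : ℝ) : PowerSeries ℝ :=
  PowerSeries.mk fun n => dimorphicMersenne lam (n + 1) / ((n + 1).factorial : ℝ)

lemma X_mul_D (lam : ℝ) :
    PowerSeries.X * degExpSubOneDivT lam = degExpSeries lam 1 - 1 := by
  ext n
  cases n with
  | zero =>
    simp [degExpSubOneDivT, degExpSeries, dff_zero, PowerSeries.coeff_zero_eq_constantCoeff]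
  | succ m =>
    rw [PowerSeries.coeff_succ_X_mul]
    simp [degExpSubOneDivT, degExpSeries, PowerSeries.coeff_one]

lemma X_mul_E (lam : ℝ) :
    PowerSeries.X * mersSeries lam = degExpSeries lam 2 - degExpSeries lam 1 := by
  ext n
  cases n with
  | zero =>
    simp [mersSeries, degExpSeries, dff_zero, PowerSeries.coeff_zero_eq_constantCoeff]
  | succ m =>
    rw [PowerSeries.coeff_succ_X_mul]
    simp [mersSeries, degExpSeries, dimorphicMersenne, sub_div]

lemma mersSeries_eq (lam : ℝ) :
    mersSeries lam = degExpSeries lam 1 * degExpSubOneDivT lam := by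
  have hX : (PowerSeries.X : PowerSeries ℝ) ≠ 0 := PowerSeries.X_ne_zero
  apply mul_left_cancel₀ hX
  rw [X_mul_E]
  have h2 : degExpSeries lam 2 = degExpSeries lam 1 * degExpSeries lam 1 := by
    rw [degExpSeries_mul]; norm_num
  rw [h2, show PowerSeries.X * (degExpSeries lam 1 * degExpSubOneDivT lam)
      = degExpSeries lam 1 * (PowerSeries.X * degExpSubOneDivT lam) by ring, X_mul_D]
  ring

lemma constCoeff_D (lam : ℝ) :
    PowerSeries.constantCoeff (degExpSubOneDivT lam) ≠ 0 := by
  have : PowerSeries.constantCoeff (degExpSubOneDivT lam) = 1 := by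
    simp [degExpSubOneDivT, ← PowerSeries.coeff_zero_eq_constantCoeff, dff_succ, dff_zero]
  rw [this]; norm_num

lemma key_series (lam x : ℝ) :
    degBernoulliSeries lam x * mersSeries lam = degExpSeries lam (x + 1) := by
  rw [mersSeries_eq, degBernoulliSeries,
    show (degExpSubOneDivT lam)⁻¹ * degExpSeries lam x *
        (degExpSeries lam 1 * degExpSubOneDivT lam)
      = (degExpSubOneDivT lam)⁻¹ * degExpSubOneDivT lam *
        (degExpSeries lam x * degExpSeries lam 1) by ring,
    PowerSeries.inv_mul_cancel _ (constCoeff_D lam), one_mul, degExpSeries_mul]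

/-- Theorem 1: `β_{n,λ}(x) = (x+1)_{n,λ} - ∑_{l=0}^{n-1} C(n,l) β_{l,λ}(x) M_{n-l+1,λ}/(n-l+1)`. -/
theorem degBernoulli_recurrence (lam : ℝ) (n : ℕ) (x : ℝ) :
    degBernoulli lam x n =
      degFallingFactorial lam (x + 1) n -
        ∑ l ∈ Finset.range n,
          (n.choose l : ℝ) * degBernoulli lam x l *
            (dimorphicMersenne lam (n - l + 1) / (n - l + 1 : ℝ)) := by
  have hkey := congrArg (PowerSeries.coeff n) (key_series lam x)
  rw [PowerSeries.coeff_mul, Finset.Nat.sum_antidiagonal_eq_sum_range_succ_mk] at hkey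
  simp only [mersSeries, degExpSeries, PowerSeries.coeff_mk] at hkey
  have hn : (n.factorial : ℝ) ≠ 0 := Nat.cast_ne_zero.mpr n.factorial_ne_zero
  have hmain : ∑ l ∈ Finset.range (n + 1),
      (n.choose l : ℝ) * degBernoulli lam x l *
        (dimorphicMersenne lam (n - l + 1) / (((n - l : ℕ) : ℝ) + 1))
      = degFallingFactorial lam (x + 1) n := by
    have hterm : ∀ l ∈ Finset.range (n + 1),
        (n.choose l : ℝ) * degBernoulli lam x l *
          (dimorphicMersenne lam (n - l + 1) / (((n - l : ℕ) : ℝ) + 1))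
        = (n.factorial : ℝ) * (PowerSeries.coeff l (degBernoulliSeries lam x) *
            (dimorphicMersenne lam (n - l + 1) / ((n - l + 1).factorial : ℝ))) := by
      intro l hl
      have hl' : l ≤ n := Nat.lt_succ_iff.mp (Finset.mem_range.mp hl)
      have h1 : (l.factorial : ℝ) ≠ 0 := Nat.cast_ne_zero.mpr l.factorial_ne_zero
      have h2 : ((n - l).factorial : ℝ) ≠ 0 := Nat.cast_ne_zero.mpr (n - l).factorial_ne_zero
      have h3 : (((n - l : ℕ) : ℝ) + 1) ≠ 0 := by positivity
      have hc : PowerSeries.coeff l (degBernoulliSeries lam x)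
          = degBernoulli lam x l / (l.factorial : ℝ) := by
        rw [degBernoulli]; field_simp
      rw [hc, Nat.cast_choose ℝ hl', Nat.factorial_succ]
      push_cast
      field_simp
    rw [Finset.sum_congr rfl hterm, ← Finset.mul_sum, hkey]
    field_simp
  rw [Finset.sum_range_succ] at hmain
  have hlast : (n.choose n : ℝ) * degBernoulli lam x n *
      (dimorphicMersenne lam (n - n + 1) / (((n - n : ℕ) : ℝ) + 1)) = degBernoulli lam x n := by
    simp [Nat.choose_self, Nat.sub_self, dimorphicMersenne, degFallingFactorial,
      Finset.prod_range_one]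
    norm_num
  rw [hlast] at hmain
  have hsum : ∑ l ∈ Finset.range n, (n.choose l : ℝ) * degBernoulli lam x l *
      (dimorphicMersenne lam (n - l + 1) / (((n - l : ℕ) : ℝ) + 1))
      = ∑ l ∈ Finset.range n, (n.choose l : ℝ) * degBernoulli lam x l *
        (dimorphicMersenne lam (n - l + 1) / ((n : ℝ) - l + 1)) := by
    apply Finset.sum_congr rfl
    intro l hl
    rw [Nat.cast_sub (le_of_lt (Finset.mem_range.mp hl))]
  rw [hsum] at hmain
  linarith
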